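/- Let ν > −1, t = (ν + n + 1)/2, β > 0, f ∈ A^∞_t(Ω), and ε > 0. If G := ∫_Ω ( ∫_{N_{ε,t}(f)} γ_{β−t}(w) |B_β(z,w)| dm(w) )² γ_ν(z) dm(z) < ∞, then the function f₂(z) = C_β ∫_{N_{ε,t}(f)} B_β(z, w) f(w) γ_β(w) dm(w) is holomorphic on Ω and belongs to A²_ν(Ω), with ‖f₂‖²_{A²_ν} ≤ C ‖f‖²_{A^∞_t} · G for a constant C independent of f. -/

import Mathlib

open MeasureTheory Complex Filter
open scoped ENNReal Topology

noncomputable section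

/-- The Siegel domain of the first type in `ℂ^(n+1)`:
`Ω = {τ : Im τ₁ > |τ̃|²}` where `τ̃ = (τ₂, …, τ_(n+1))`. -/
def Omega (n : ℕ) : Set (Fin (n + 1) → ℂ) :=
  {τ | (∑ j ∈ Finset.Ioi (0 : Fin (n + 1)), ‖τ j‖ ^ 2) < (τ 0).im}

/-- The weight `γ_α(τ) = (Im τ₁ − |τ̃|²)^α`. -/
def gam (n : ℕ) (α : ℝ) (τ : Fin (n + 1) → ℂ) : ℝ :=
  ((τ 0).im - ∑ j ∈ Finset.Ioi (0 : Fin (n + 1)), ‖τ j‖ ^ 2) ^ α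

/-- The weighted Bergman kernel
`B_β(z,w) = ((z₁ − w̄₁)/i − 2⟨z̃, w̃⟩)^(−((n+1)+1+β))` (dimension is `n+1`). -/
def Berg (n : ℕ) (β : ℝ) (z w : Fin (n + 1) → ℂ) : ℂ :=
  ((z 0 - starRingEnd ℂ (w 0)) / Complex.I
      - 2 * ∑ j ∈ Finset.Ioi (0 : Fin (n + 1)), z j * starRingEnd ℂ (w j))
    ^ (-(((n : ℂ) + 1) + 1 + (β : ℂ)))

/-- Membership in `A^∞_β(Ω)`: holomorphic with `sup_Ω |f| γ_β < ∞`. -/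
def MemAinf (n : ℕ) (β : ℝ) (f : (Fin (n + 1) → ℂ) → ℂ) : Prop :=
  DifferentiableOn ℂ f (Omega n) ∧
    BddAbove (Set.range fun z : Omega n => ‖f z.1‖ * gam n β z.1)

/-- The norm of `A^∞_β(Ω)`: `‖f‖ = sup_{z ∈ Ω} |f(z)| γ_β(z)`. -/
def normAinf (n : ℕ) (β : ℝ) (f : (Fin (n + 1) → ℂ) → ℂ) : ℝ :=
  ⨆ z : Omega n, ‖f z.1‖ * gam n β z.1

/-- Membership in the weighted Bergman space `A²_ν(Ω)`. -/
def MemA2 (n : ℕ) (ν : ℝ) (f : (Fin (n + 1) → ℂ) → ℂ) : Prop :=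
  DifferentiableOn ℂ f (Omega n) ∧
    (∫⁻ z in Omega n, ENNReal.ofReal (‖f z‖ ^ 2 * gam n ν z)) < ⊤

/-- The norm of `A²_ν(Ω)`. -/
def normA2 (n : ℕ) (ν : ℝ) (f : (Fin (n + 1) → ℂ) → ℂ) : ℝ :=
  Real.sqrt (∫ z in Omega n, ‖f z‖ ^ 2 * gam n ν z)

/-- `dist_{A^∞_t}(f, A²_ν) = inf {‖f − g‖_{A^∞_t} : g ∈ A²_ν}`. -/
def distA (n : ℕ) (t ν : ℝ) (f : (Fin (n + 1) → ℂ) → ℂ) : ℝ :=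
  sInf {r | ∃ g, MemA2 n ν g ∧ r = normAinf n t (fun z => f z - g z)}

/-- The level set `N_{ε,s}(f) = {z ∈ Ω : |f(z)| γ_s(z) ≥ ε}`. -/
def Nset (n : ℕ) (ε s : ℝ) (f : (Fin (n + 1) → ℂ) → ℂ) : Set (Fin (n + 1) → ℂ) :=
  {z | z ∈ Omega n ∧ ε ≤ ‖f z‖ * gam n s z}

/-- The double integral
`∫_Ω (∫_{N_{ε,t}(f)} γ_{β−t}(w) |B_β(z,w)| dm(w))² γ_ν(z) dm(z)`. -/
def Gint (n : ℕ) (β t ν ε : ℝ) (f : (Fin (n + 1) → ℂ) → ℂ) : ℝ≥0∞ :=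
  ∫⁻ z in Omega n,
    (∫⁻ w in Nset n ε t f,
        ENNReal.ofReal (gam n (β - t) w * ‖Berg n β z w‖)) ^ 2
      * ENNReal.ofReal (gam n ν z)

/-- `l₂(f) = inf {ε > 0 : G(f, ε) < ∞}`. -/
def l2 (n : ℕ) (β t ν : ℝ) (f : (Fin (n + 1) → ℂ) → ℂ) : ℝ :=
  sInf {ε | 0 < ε ∧ Gint n β t ν ε f < ⊤}


namespace S11

def rho (n : ℕ) (z : Fin (n+1) → ℂ) : ℝ :=
  (z 0).im - ∑ j ∈ Finset.Ioi (0 : Fin (n+1)), ‖z j‖ ^ 2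

def base (n : ℕ) (z w : Fin (n+1) → ℂ) : ℂ :=
  (z 0 - starRingEnd ℂ (w 0)) / Complex.I
    - 2 * ∑ j ∈ Finset.Ioi (0 : Fin (n+1)), z j * starRingEnd ℂ (w j)

def Qd (n : ℕ) (z w : Fin (n+1) → ℂ) : ℝ :=
  ∑ j ∈ Finset.Ioi (0 : Fin (n+1)), ‖z j - w j‖ ^ 2

def T (n : ℕ) (w : Fin (n+1) → ℂ) : ℝ :=
  ∑ j ∈ Finset.Ioi (0 : Fin (n+1)), ‖w j‖

def eR (n : ℕ) (β : ℝ) : ℝ := (n : ℝ) + 1 + 1 + β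

variable {n : ℕ}

lemma mem_Omega_iff {z : Fin (n+1) → ℂ} : z ∈ Omega n ↔ 0 < rho n z := by
  simp [Omega, rho, sub_pos]

lemma base_re (z w : Fin (n+1) → ℂ) : (base n z w).re = rho n z + rho n w + Qd n z w := by
  have h1 : ∀ u : ℂ, (u / Complex.I).re = u.im := by
    intro u; rw [Complex.div_I]; simp
  simp only [base, Complex.sub_re, h1, Complex.sub_im, Complex.conj_im, Complex.conj_re,
    Complex.mul_re, Complex.re_sum, Complex.im_sum, rho, Qd]
  simp only [Complex.sq_norm, Complex.normSq_apply, Complex.sub_re, Complex.sub_im]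
  rw [show ((2:ℂ).re = 2) from rfl, show ((2:ℂ).im = 0) from rfl]
  have key : 2 * ∑ x ∈ Finset.Ioi (0 : Fin (n+1)), ((z x).re * (w x).re - (z x).im * -(w x).im)
      = ∑ x ∈ Finset.Ioi (0 : Fin (n+1)), ((z x).re * (z x).re + (z x).im * (z x).im)
        + ∑ x ∈ Finset.Ioi (0 : Fin (n+1)), ((w x).re * (w x).re + (w x).im * (w x).im)
        - ∑ x ∈ Finset.Ioi (0 : Fin (n+1)),
            (((z x).re - (w x).re) * ((z x).re - (w x).re)
              + ((z x).im - (w x).im) * ((z x).im - (w x).im)) := by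
    rw [Finset.mul_sum, ← Finset.sum_add_distrib, ← Finset.sum_sub_distrib]
    exact Finset.sum_congr rfl fun x _ => by ring
  linarith [key]

lemma rho_pos {z : Fin (n+1) → ℂ} (hz : z ∈ Omega n) : 0 < rho n z := mem_Omega_iff.mp hz

lemma Qd_nonneg (z w : Fin (n+1) → ℂ) : 0 ≤ Qd n z w :=
  Finset.sum_nonneg fun _ _ => sq_nonneg _

lemma T_nonneg (w : Fin (n+1) → ℂ) : 0 ≤ T n w :=
  Finset.sum_nonneg fun _ _ => (norm_nonneg _)

lemma base_re_pos {z w : Fin (n+1) → ℂ} (hz : z ∈ Omega n) (hw : w ∈ Omega n) :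
    0 < (base n z w).re := by
  rw [base_re]
  have := rho_pos hz; have := rho_pos hw; have := Qd_nonneg z w; linarith

lemma base_lower {z w : Fin (n+1) → ℂ} (hz : z ∈ Omega n) (hw : w ∈ Omega n) :
    rho n z + Qd n z w ≤ ‖base n z w‖ := by
  have h1 := Complex.re_le_norm (base n z w)
  rw [base_re] at h1
  have := rho_pos hw; linarith

lemma abs_base_pos {z w : Fin (n+1) → ℂ} (hz : z ∈ Omega n) (hw : w ∈ Omega n) :
    0 < ‖base n z w‖ :=
  lt_of_lt_of_le (by have := rho_pos hz; have := Qd_nonneg z w; linarith) (base_lower hz hw)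

lemma eR_pos {β : ℝ} (hβ : 0 < β) : 0 < eR n β := by
  have : (0:ℝ) ≤ (n:ℝ) := Nat.cast_nonneg n
  unfold eR; linarith

lemma exp_cast (β : ℝ) : -(((n : ℂ) + 1) + 1 + (β : ℂ)) = ((-(eR n β) : ℝ) : ℂ) := by
  unfold eR; push_cast; ring

lemma berg_eq (β : ℝ) (z w : Fin (n+1) → ℂ) :
    Berg n β z w = base n z w ^ ((-(eR n β) : ℝ) : ℂ) := by
  rw [← exp_cast]; rfl

lemma abs_berg (β : ℝ) (z w : Fin (n+1) → ℂ) :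
    ‖Berg n β z w‖ = ‖base n z w‖ ^ (-(eR n β)) := by
  rw [berg_eq, Complex.norm_cpow_real]

lemma isOpen_Omega : IsOpen (Omega n) := by
  apply isOpen_lt
  · exact continuous_finset_sum _ fun j _ =>
      (continuous_norm.comp (continuous_apply j)).pow 2
  · exact Complex.continuous_im.comp (continuous_apply 0)

lemma omega_nonempty : (Omega n).Nonempty := by
  refine ⟨fun j => if j = 0 then Complex.I else 0, ?_⟩
  simp only [Omega, Set.mem_setOf_eq]
  rw [Finset.sum_eq_zero]
  · simp
  · intro j hj
    have : j ≠ 0 := Fin.pos_iff_ne_zero.mp (Finset.mem_Ioi.mp hj)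
    simp [this]

lemma abs_apply_le_sqrt_Qd (z w : Fin (n+1) → ℂ) {j : Fin (n+1)}
    (hj : j ∈ Finset.Ioi (0 : Fin (n+1))) :
    ‖z j - w j‖ ≤ Real.sqrt (Qd n z w) := by
  rw [show ‖z j - w j‖ = Real.sqrt (‖z j - w j‖ ^ 2) from
    (Real.sqrt_sq (norm_nonneg _)).symm]
  apply Real.sqrt_le_sqrt
  unfold Qd
  exact Finset.single_le_sum (f := fun i => ‖z i - w i‖ ^ 2)
    (fun i _ => sq_nonneg _) hj

/-- 1 + 2 T(w) ≤ C₀ |base z₀ w| for w ∈ Ω. -/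
lemma T_bound {z₀ : Fin (n+1) → ℂ} (hz₀ : z₀ ∈ Omega n) :
    ∃ C₀ ≥ 1, ∀ w ∈ Omega n, 1 + 2 * T n w ≤ C₀ * ‖base n z₀ w‖ := by
  set A := T n z₀ with hA
  have hA0 : 0 ≤ A := T_nonneg z₀
  have hρ := rho_pos hz₀
  refine ⟨max ((1 + 2*A + 2*((n:ℝ)+1)) / rho n z₀) ((n:ℝ)+1) + 1, ?_, ?_⟩
  · have : (0:ℝ) ≤ max ((1 + 2*A + 2*((n:ℝ)+1)) / rho n z₀) ((n:ℝ)+1) :=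
      le_trans (by positivity) (le_max_right _ _)
    linarith
  · intro w hw
    set Q := Qd n z₀ w with hQ
    have hQ0 : 0 ≤ Q := Qd_nonneg _ _
    have hsq : Real.sqrt Q ^ 2 = Q := Real.sq_sqrt hQ0
    have hsqrt_nonneg : 0 ≤ Real.sqrt Q := Real.sqrt_nonneg _
    have hsqrtQ : Real.sqrt Q ≤ (1 + Q)/2 := by nlinarith [sq_nonneg (Real.sqrt Q - 1)]
    -- T w ≤ A + (n+1) * sqrt Q
    have hT : T n w ≤ A + ((n:ℝ)+1) * Real.sqrt Q := by
      have h1 : T n w ≤ ∑ j ∈ Finset.Ioi (0 : Fin (n+1)),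
          (‖z₀ j‖ + Real.sqrt Q) := by
        apply Finset.sum_le_sum
        intro j hj
        calc ‖w j‖ = ‖z₀ j - (z₀ j - w j)‖ := by ring_nf
          _ ≤ ‖z₀ j‖ + ‖w j - z₀ j‖ := by
              simpa using norm_add_le (z₀ j) (-(z₀ j - w j))
          _ ≤ ‖z₀ j‖ + Real.sqrt Q := by
              rw [norm_sub_rev]
              have := abs_apply_le_sqrt_Qd z₀ w hj; linarith
      rw [Finset.sum_add_distrib, Finset.sum_const] at h1
      have hcard : ((Finset.Ioi (0 : Fin (n+1))).card : ℝ) ≤ (n:ℝ)+1 := by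
        have := Finset.card_le_univ (Finset.Ioi (0 : Fin (n+1)))
        have h2 : (Finset.univ : Finset (Fin (n+1))).card = n+1 := by simp
        exact_mod_cast le_trans this (le_of_eq h2)
      calc T n w ≤ A + (Finset.Ioi (0 : Fin (n+1))).card • Real.sqrt Q := h1
        _ = A + ((Finset.Ioi (0 : Fin (n+1))).card : ℝ) * Real.sqrt Q := by
            rw [nsmul_eq_mul]
        _ ≤ A + ((n:ℝ)+1) * Real.sqrt Q := by nlinarith
    have hbase : rho n z₀ + Q ≤ ‖base n z₀ w‖ := base_lower hz₀ hw
    set C₀ := max ((1 + 2*A + 2*((n:ℝ)+1)) / rho n z₀) ((n:ℝ)+1) + 1 with hC₀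
    have hc1 : (1 + 2*A + 2*((n:ℝ)+1)) / rho n z₀ ≤ C₀ - 1 := by
      rw [hC₀]; simp [le_max_left]
    have hc2 : (n:ℝ)+1 ≤ C₀ - 1 := by rw [hC₀]; simp [le_max_right]
    have hc1' : 1 + 2*A + 2*((n:ℝ)+1) ≤ (C₀ - 1) * rho n z₀ := by
      rwa [div_le_iff₀ hρ] at hc1
    have key : 1 + 2 * T n w ≤ (C₀-1) * (rho n z₀ + Q) + Q := by nlinarith
    nlinarith [hbase, abs_base_pos hz₀ hw]

/-- difference bound -/
lemma base_diff (z z' w : Fin (n+1) → ℂ) :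
    ‖base n z' w - base n z w‖ ≤ ‖z' - z‖ * (1 + 2 * T n w) := by
  have hs : ∑ j ∈ Finset.Ioi (0 : Fin (n+1)), (z' j - z j) * starRingEnd ℂ (w j)
      = ∑ j ∈ Finset.Ioi (0 : Fin (n+1)), z' j * starRingEnd ℂ (w j)
        - ∑ j ∈ Finset.Ioi (0 : Fin (n+1)), z j * starRingEnd ℂ (w j) := by
    rw [← Finset.sum_sub_distrib]; exact Finset.sum_congr rfl fun j _ => by ring
  have heq : base n z' w - base n z w
      = (z' 0 - z 0)/Complex.I
        - 2 * ∑ j ∈ Finset.Ioi (0 : Fin (n+1)), (z' j - z j) * starRingEnd ℂ (w j) := by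
    rw [hs]; simp only [base]; ring
  rw [heq]
  have h0 : ∀ j, ‖z' j - z j‖ ≤ ‖z' - z‖ := by
    intro j
    have := norm_le_pi_norm (z' - z) j
    simpa using this
  calc ‖(z' 0 - z 0)/Complex.I
        - 2 * ∑ j ∈ Finset.Ioi (0 : Fin (n+1)), (z' j - z j) * starRingEnd ℂ (w j)‖
      ≤ ‖(z' 0 - z 0)/Complex.I‖
        + ‖2 * ∑ j ∈ Finset.Ioi (0 : Fin (n+1)),
            (z' j - z j) * starRingEnd ℂ (w j)‖ := by
        simpa [sub_eq_add_neg] using norm_add_le ((z' 0 - z 0)/Complex.I)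
          (-(2 * ∑ j ∈ Finset.Ioi (0 : Fin (n+1)), (z' j - z j) * starRingEnd ℂ (w j)))
    _ ≤ ‖z' - z‖ + 2 * (‖z' - z‖ * T n w) := by
        gcongr
        · rw [norm_div, Complex.norm_I, div_one]; exact h0 0
        · rw [norm_mul, Complex.norm_two]
          gcongr
          calc ‖∑ j ∈ Finset.Ioi (0 : Fin (n+1)),
                (z' j - z j) * starRingEnd ℂ (w j)‖
              ≤ ∑ j ∈ Finset.Ioi (0 : Fin (n+1)),
                  ‖(z' j - z j) * starRingEnd ℂ (w j)‖ :=
                norm_sum_le _ _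
            _ ≤ ∑ j ∈ Finset.Ioi (0 : Fin (n+1)), ‖z' - z‖ * ‖w j‖ := by
                apply Finset.sum_le_sum; intro j _
                rw [norm_mul, Complex.norm_conj]
                exact mul_le_mul_of_nonneg_right (h0 j) (norm_nonneg _)
            _ = ‖z' - z‖ * T n w := by rw [← Finset.mul_sum]; rfl
    _ = ‖z' - z‖ * (1 + 2 * T n w) := by ring

/-- Global comparison of kernels at two points. -/
lemma base_comp {z z' : Fin (n+1) → ℂ} (hz : z ∈ Omega n) (hz' : z' ∈ Omega n) :
    ∃ K ≥ 1, ∀ w ∈ Omega n,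
      ‖base n z' w‖ ≤ K * ‖base n z w‖ := by
  obtain ⟨C₀, hC₀1, hC₀⟩ := T_bound hz
  refine ⟨1 + ‖z' - z‖ * C₀, by nlinarith [norm_nonneg (z' - z)], fun w hw => ?_⟩
  have h1 : ‖base n z' w‖
      ≤ ‖base n z w‖ + ‖base n z' w - base n z w‖ := by
    simpa using norm_add_le (base n z w) (base n z' w - base n z w)
  have h2 := base_diff z z' w
  have h3 := hC₀ w hw
  have h4 : 0 ≤ ‖z' - z‖ := norm_nonneg _
  nlinarith [abs_base_pos hz hw]

/-- ball comparison -/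
lemma ball_comp {z₀ : Fin (n+1) → ℂ} (hz₀ : z₀ ∈ Omega n) :
    ∃ r > 0, (∀ z ∈ Metric.ball z₀ r, z ∈ Omega n) ∧
      ∀ z ∈ Metric.ball z₀ r, ∀ w ∈ Omega n,
        ‖base n z₀ w‖ ≤ 2 * ‖base n z w‖ := by
  obtain ⟨C₀, hC₀1, hC₀⟩ := T_bound hz₀
  obtain ⟨r₁, hr₁, hball⟩ := Metric.isOpen_iff.mp isOpen_Omega z₀ hz₀
  have hC₀0 : 0 < C₀ := lt_of_lt_of_le one_pos hC₀1
  refine ⟨min r₁ (1/(2*C₀)), by positivity, fun z hz => hball (Metric.ball_subset_ball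
    (min_le_left _ _) hz), fun z hz w hw => ?_⟩
  have hzr : ‖z - z₀‖ < 1/(2*C₀) := by
    have := Metric.mem_ball.mp hz
    rw [dist_eq_norm] at this
    exact lt_of_lt_of_le this (min_le_right _ _)
  have h1 : ‖base n z₀ w‖
      ≤ ‖base n z w‖ + ‖base n z₀ w - base n z w‖ := by
    simpa using norm_add_le (base n z w) (base n z₀ w - base n z w)
  have h2 : ‖base n z₀ w - base n z w‖ ≤ ‖z₀ - z‖ * (1 + 2 * T n w) :=
    base_diff z z₀ w
  have h2' : ‖z₀ - z‖ = ‖z - z₀‖ := norm_sub_rev _ _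
  have h3 := hC₀ w hw
  have hT := T_nonneg w
  have hB := abs_base_pos hz₀ hw
  have h5 : ‖z - z₀‖ * (1 + 2 * T n w) ≤ (1/(2*C₀)) * (C₀ * ‖base n z₀ w‖) := by
    apply mul_le_mul (le_of_lt hzr) h3 (by linarith) (by positivity)
  have h6 : (1/(2*C₀)) * (C₀ * ‖base n z₀ w‖)
      = ‖base n z₀ w‖ / 2 := by field_simp
  nlinarith


/-- The `z`-derivative of `base n · w`. -/
def Lmap (n : ℕ) (w : Fin (n+1) → ℂ) : (Fin (n+1) → ℂ) →L[ℂ] ℂ :=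
  Complex.I⁻¹ • (ContinuousLinearMap.proj 0)
    - (2:ℂ) • ∑ j ∈ Finset.Ioi (0 : Fin (n+1)),
        (starRingEnd ℂ (w j)) • (ContinuousLinearMap.proj j :
          (Fin (n+1) → ℂ) →L[ℂ] ℂ)

lemma Lmap_apply (w v : Fin (n+1) → ℂ) :
    Lmap n w v = v 0 / Complex.I
      - 2 * ∑ j ∈ Finset.Ioi (0 : Fin (n+1)), v j * starRingEnd ℂ (w j) := by
  simp only [Lmap, ContinuousLinearMap.sub_apply, ContinuousLinearMap.smul_apply,
    ContinuousLinearMap.sum_apply, ContinuousLinearMap.proj_apply, smul_eq_mul,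
    Finset.mul_sum]
  rw [div_eq_mul_inv]
  ring_nf
  congr 1
  exact Finset.sum_congr rfl fun j _ => by ring

lemma hasFDerivAt_base (w z : Fin (n+1) → ℂ) :
    HasFDerivAt (fun z => base n z w) (Lmap n w) z := by
  have heq : (fun z : Fin (n+1) → ℂ => base n z w)
      = fun z => Lmap n w z + (-(starRingEnd ℂ (w 0) / Complex.I)) := by
    funext z; rw [Lmap_apply]; simp only [base]; ring
  rw [heq]
  exact (Lmap n w).hasFDerivAt.add_const _

lemma Lmap_norm (w : Fin (n+1) → ℂ) : ‖Lmap n w‖ ≤ 1 + 2 * T n w := by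
  have hT : 0 ≤ T n w := Finset.sum_nonneg fun _ _ => norm_nonneg _
  apply ContinuousLinearMap.opNorm_le_bound _ (by linarith)
  intro v
  rw [Lmap_apply]
  have h0 : ∀ j, ‖v j‖ ≤ ‖v‖ := by
    intro j; simpa using norm_le_pi_norm v j
  calc ‖v 0 / Complex.I
        - 2 * ∑ j ∈ Finset.Ioi (0 : Fin (n+1)), v j * starRingEnd ℂ (w j)‖
      ≤ ‖v 0 / Complex.I‖
        + ‖2 * ∑ j ∈ Finset.Ioi (0 : Fin (n+1)), v j * starRingEnd ℂ (w j)‖ := by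
        simpa [sub_eq_add_neg] using norm_add_le (v 0 / Complex.I)
          (-(2 * ∑ j ∈ Finset.Ioi (0 : Fin (n+1)), v j * starRingEnd ℂ (w j)))
    _ ≤ ‖v‖ + 2 * (T n w * ‖v‖) := by
        gcongr
        · rw [norm_div, Complex.norm_I, div_one]; exact h0 0
        · rw [norm_mul, Complex.norm_two]
          gcongr
          calc ‖∑ j ∈ Finset.Ioi (0 : Fin (n+1)), v j * starRingEnd ℂ (w j)‖
              ≤ ∑ j ∈ Finset.Ioi (0 : Fin (n+1)), ‖v j * starRingEnd ℂ (w j)‖ :=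
                norm_sum_le _ _
            _ ≤ ∑ j ∈ Finset.Ioi (0 : Fin (n+1)), ‖w j‖ * ‖v‖ := by
                apply Finset.sum_le_sum; intro j _
                rw [norm_mul, Complex.norm_conj, mul_comm]
                exact mul_le_mul_of_nonneg_left (h0 j) (norm_nonneg _)
            _ = T n w * ‖v‖ := by rw [← Finset.sum_mul]; rfl
    _ = (1 + 2 * T n w) * ‖v‖ := by ring

/-- derivative of the kernel in `z`. -/
def dBerg (n : ℕ) (β : ℝ) (z w : Fin (n+1) → ℂ) : (Fin (n+1) → ℂ) →L[ℂ] ℂ :=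
  ((-(((n:ℂ)+1)+1+(β:ℂ))) * base n z w ^ ((-(((n:ℂ)+1)+1+(β:ℂ))) - 1)) • Lmap n w

lemma hasFDerivAt_berg {β : ℝ} {z w : Fin (n+1) → ℂ} (h : 0 < (base n z w).re) :
    HasFDerivAt (fun z => Berg n β z w) (dBerg n β z w) z := by
  have hmem : base n z w ∈ Complex.slitPlane := Or.inl h
  have h1 : HasDerivAt (fun x : ℂ => x ^ (-(((n:ℂ)+1)+1+(β:ℂ))))
      ((-(((n:ℂ)+1)+1+(β:ℂ))) * base n z w ^ ((-(((n:ℂ)+1)+1+(β:ℂ))) - 1)) (base n z w) :=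
    (Complex.hasStrictDerivAt_cpow_const hmem).hasDerivAt
  have h2 := h1.comp_hasFDerivAt z (hasFDerivAt_base w z)
  exact h2

lemma measurable_cpow_const {α : Type*} [MeasurableSpace α] {f : α → ℂ}
    (hf : Measurable f) (c : ℂ) : Measurable fun x => f x ^ c := by
  have : (fun x => f x ^ c)
      = fun x => if f x = 0 then (if c = 0 then 1 else 0)
          else Complex.exp (Complex.log (f x) * c) := by
    funext x; rw [Complex.cpow_def]
  rw [this]
  exact Measurable.ite (hf (measurableSet_singleton 0)) measurable_const
    (Complex.measurable_exp.comp ((Complex.measurable_log.comp hf).mul_const c))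

lemma continuous_base2 : Continuous fun p : (Fin (n+1) → ℂ) × (Fin (n+1) → ℂ) =>
    base n p.1 p.2 := by
  unfold base
  apply Continuous.sub
  · apply Continuous.div_const
    exact ((continuous_apply 0).comp continuous_fst).sub
      (Complex.continuous_conj.comp ((continuous_apply 0).comp continuous_snd))
  · exact continuous_const.mul (continuous_finset_sum _ fun j _ =>
      (((continuous_apply j).comp continuous_fst)).mul
        (Complex.continuous_conj.comp ((continuous_apply j).comp continuous_snd)))

lemma measurable_berg2 (β : ℝ) :
    Measurable fun p : (Fin (n+1) → ℂ) × (Fin (n+1) → ℂ) => Berg n β p.1 p.2 :=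
  measurable_cpow_const continuous_base2.measurable _

lemma measurable_berg (β : ℝ) (z : Fin (n+1) → ℂ) :
    Measurable fun w => Berg n β z w :=
  measurable_cpow_const (continuous_base2.measurable.comp
    (measurable_const.prodMk measurable_id)) _

lemma continuous_rho : Continuous (rho n) := by
  unfold rho
  exact (Complex.continuous_im.comp (continuous_apply 0)).sub
    (continuous_finset_sum _ fun j _ =>
      (continuous_norm.comp (continuous_apply j)).pow 2)

lemma measurable_rpow_const {α : Type*} [MeasurableSpace α] {f : α → ℝ}
    (hf : Measurable f) (c : ℝ) : Measurable fun x => f x ^ c := by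
  have : (fun x => f x ^ c) = fun x => ((f x : ℂ) ^ (c : ℂ)).re := by
    funext x; rw [Real.rpow_def]
  rw [this]
  exact Complex.measurable_re.comp
    (measurable_cpow_const (Complex.measurable_ofReal.comp hf) _)

lemma measurable_gam (α : ℝ) : Measurable (gam n α) := by
  have : gam n α = fun τ => (rho n τ) ^ α := rfl
  rw [this]
  exact measurable_rpow_const continuous_rho.measurable α

lemma continuousOn_gam {α : ℝ} : ContinuousOn (gam n α) (Omega n) := by
  intro z hz
  have hρ : 0 < rho n z := by
    simpa [Omega, rho, sub_pos] using hz
  apply ContinuousAt.continuousWithinAt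
  exact (Real.continuousAt_rpow_const _ _ (Or.inl (ne_of_gt hρ))).comp
    continuous_rho.continuousAt


end S11
namespace S11

variable {n : ℕ}

lemma gam_eq (s : ℝ) (w : Fin (n+1) → ℂ) : gam n s w = rho n w ^ s := rfl

lemma gam_pos {s : ℝ} {w : Fin (n+1) → ℂ} (hw : w ∈ Omega n) : 0 < gam n s w :=
  Real.rpow_pos_of_pos (rho_pos hw) _

lemma gam_split {β t : ℝ} {w : Fin (n+1) → ℂ} (hw : w ∈ Omega n) :
    gam n β w = gam n t w * gam n (β - t) w := by
  rw [gam_eq, gam_eq, gam_eq, ← Real.rpow_add (rho_pos hw)]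
  norm_num

lemma rpow_neg_compare {u v K s : ℝ} (hu : 0 < u) (hv : 0 < v) (hK : 0 < K)
    (h : v ≤ K * u) (hs : 0 ≤ s) : u ^ (-s) ≤ K ^ s * v ^ (-s) := by
  have h1 : v / K ≤ u := by rw [div_le_iff₀ hK]; linarith [mul_comm K u]
  have h2 : u ^ (-s) ≤ (v / K) ^ (-s) :=
    Real.rpow_le_rpow_of_nonpos (by positivity) h1 (neg_nonpos.mpr hs)
  have h3 : (v / K) ^ (-s) = K ^ s * v ^ (-s) := by
    rw [Real.div_rpow hv.le hK.le, Real.rpow_neg hv.le, Real.rpow_neg hK.le]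
    field_simp
  rw [h3] at h2; exact h2

lemma measurableSet_Nset {f : (Fin (n+1) → ℂ) → ℂ} (hf : ContinuousOn f (Omega n))
    (ε s : ℝ) : MeasurableSet (Nset n ε s f) := by
  have hgc : ContinuousOn (fun z => ‖f z‖ * gam n s z) (Omega n) :=
    (continuous_norm.comp_continuousOn hf).mul continuousOn_gam
  have heq : Nset n ε s f = ⋂ k : ℕ, (Omega n ∩
      (fun z => ‖f z‖ * gam n s z) ⁻¹' Set.Ioi (ε - 1/(k+1))) := by
    ext z
    simp only [Nset, Set.mem_setOf_eq, Set.mem_iInter, Set.mem_inter_iff,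
      Set.mem_preimage, Set.mem_Ioi]
    constructor
    · rintro ⟨hzΩ, hzε⟩ k
      have : (0:ℝ) < 1/(k+1) := by positivity
      exact ⟨hzΩ, by linarith⟩
    · intro h
      refine ⟨(h 0).1, ?_⟩
      by_contra hc
      push_neg at hc
      obtain ⟨k, hk⟩ := exists_nat_one_div_lt
        (show (0:ℝ) < ε - ‖f z‖ * gam n s z by linarith)
      have := (h k).2
      have h2 : (1:ℝ)/(k+1) < ε - ‖f z‖ * gam n s z := by exact_mod_cast hk
      linarith
  rw [heq]
  exact MeasurableSet.iInter fun k =>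
    (hgc.isOpen_inter_preimage isOpen_Omega isOpen_Ioi).measurableSet

/-- finiteness transfer for the inner integral -/
lemma kernel_finite_transfer {β s : ℝ} (hβ : 0 < β) {N : Set (Fin (n+1) → ℂ)}
    (hN : N ⊆ Omega n) (hNm : MeasurableSet N) {zs z0 : Fin (n+1) → ℂ}
    (hzs : zs ∈ Omega n) (hz0 : z0 ∈ Omega n)
    (hfin : (∫⁻ w in N, ENNReal.ofReal (gam n s w * ‖Berg n β zs w‖)) < ⊤) :
    (∫⁻ w in N, ENNReal.ofReal (gam n s w * ‖Berg n β z0 w‖)) < ⊤ := by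
  obtain ⟨K, hK1, hK⟩ := base_comp hz0 hzs
  have hK0 : (0:ℝ) < K := lt_of_lt_of_le one_pos hK1
  have he : 0 < eR n β := eR_pos hβ
  have hmono : (∫⁻ w in N, ENNReal.ofReal (gam n s w * ‖Berg n β z0 w‖))
      ≤ ∫⁻ w in N, ENNReal.ofReal (K ^ (eR n β)) *
          ENNReal.ofReal (gam n s w * ‖Berg n β zs w‖) := by
    apply lintegral_mono_ae
    filter_upwards [ae_restrict_mem hNm] with w hw
    have hwΩ := hN hw
    rw [← ENNReal.ofReal_mul (by positivity)]
    apply ENNReal.ofReal_le_ofReal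
    rw [abs_berg, abs_berg]
    have hb : ‖base n z0 w‖ ^ (-(eR n β))
        ≤ K ^ (eR n β) * ‖base n zs w‖ ^ (-(eR n β)) :=
      rpow_neg_compare (abs_base_pos hz0 hwΩ) (abs_base_pos hzs hwΩ) hK0
        (hK w hwΩ) he.le
    have hγ : 0 ≤ gam n s w := (gam_pos hwΩ).le
    calc gam n s w * (‖base n z0 w‖ ^ (-(eR n β)))
        ≤ gam n s w * (K ^ (eR n β) * ‖base n zs w‖ ^ (-(eR n β))) :=
          mul_le_mul_of_nonneg_left hb hγ
      _ = K ^ (eR n β) * (gam n s w * ‖base n zs w‖ ^ (-(eR n β))) := by ring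
  rw [lintegral_const_mul' _ _ ENNReal.ofReal_ne_top] at hmono
  exact lt_of_le_of_lt hmono (ENNReal.mul_lt_top ENNReal.ofReal_lt_top hfin)


lemma continuous_Lmap : Continuous fun w : Fin (n+1) → ℂ => Lmap n w := by
  unfold Lmap
  apply Continuous.sub continuous_const
  refine Continuous.const_smul (g := fun w : Fin (n+1) → ℂ => ∑ j ∈ Finset.Ioi (0 : Fin (n+1)),
      (starRingEnd ℂ (w j)) • (ContinuousLinearMap.proj j : (Fin (n+1) → ℂ) →L[ℂ] ℂ)) ?_ (2:ℂ)
  exact continuous_finset_sum _ fun j _ =>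
    (Complex.continuous_conj.comp (continuous_apply j)).smul continuous_const

lemma norm_dBerg_le {β : ℝ} (hβ : 0 < β) (z w : Fin (n+1) → ℂ) :
    ‖dBerg n β z w‖
      ≤ eR n β * ‖base n z w‖ ^ (-(eR n β) - 1) * (1 + 2 * T n w) := by
  have hT : 0 ≤ T n w := T_nonneg w
  have he := eR_pos (n := n) hβ
  have h1 : ‖dBerg n β z w‖
      = ‖-(((n:ℂ)+1)+1+(β:ℂ)) * base n z w ^ ((-(((n:ℂ)+1)+1+(β:ℂ))) - 1)‖
        * ‖Lmap n w‖ := by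
    unfold dBerg
    rw [norm_smul (-(((n:ℂ)+1)+1+(β:ℂ)) * base n z w ^ ((-(((n:ℂ)+1)+1+(β:ℂ))) - 1))
      (Lmap n w)]
  have h2 : ‖-(((n:ℂ)+1)+1+(β:ℂ))‖ = eR n β := by
    rw [exp_cast, Complex.norm_real, Real.norm_eq_abs, abs_of_nonpos (by linarith), neg_neg]
  have h3 : ‖base n z w ^ ((-(((n:ℂ)+1)+1+(β:ℂ))) - 1)‖
      = ‖base n z w‖ ^ (-(eR n β) - 1) := by
    have hc : (-(((n:ℂ)+1)+1+(β:ℂ))) - 1 = ((-(eR n β) - 1 : ℝ) : ℂ) := by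
      unfold eR; push_cast; ring
    rw [hc, Complex.norm_cpow_real]
  rw [h1, norm_mul, h2, h3]
  have hpos : 0 ≤ eR n β * ‖base n z w‖ ^ (-(eR n β) - 1) := by positivity
  exact mul_le_mul_of_nonneg_left (Lmap_norm w) hpos

end S11
/-- if `G = ∫_Ω (∫_{N_{ε,t}(f)} γ_{β−t} |B_β| dm)² γ_ν dm < ∞`, then
`f₂(z) = C_β ∫_{N_{ε,t}(f)} B_β(z,w) f(w) γ_β(w) dm(w)` is holomorphic on `Ω`,
belongs to `A²_ν(Ω)`, and `‖f₂‖²_{A²_ν} ≤ C ‖f‖²_{A^∞_t} · G` with `C`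
independent of `f`. -/
theorem stmt11 (n : ℕ) (ν β Cβ : ℝ) (hν : -1 < ν) (hβ : 0 < β) (t : ℝ)
    (ht : t = (ν + (n + 1 : ℝ) + 1) / 2) :
    ∃ C > (0 : ℝ), ∀ f ε, MemAinf n t f → 0 < ε → Gint n β t ν ε f < ⊤ →
      DifferentiableOn ℂ
        (fun z => (Cβ : ℂ) * ∫ w in Nset n ε t f, Berg n β z w * f w * (gam n β w : ℂ))
        (Omega n) ∧
      MemA2 n ν
        (fun z => (Cβ : ℂ) * ∫ w in Nset n ε t f, Berg n β z w * f w * (gam n β w : ℂ)) ∧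
      (normA2 n ν
          (fun z => (Cβ : ℂ) * ∫ w in Nset n ε t f, Berg n β z w * f w * (gam n β w : ℂ))) ^ 2
        ≤ C * (normAinf n t f) ^ 2 * (Gint n β t ν ε f).toReal := by
  classical
  refine ⟨Cβ ^ 2 + 1, by positivity, ?_⟩
  intro f ε hf hε hG
  obtain ⟨hfd, hfbdd⟩ := hf
  have hfc : ContinuousOn f (Omega n) := hfd.continuousOn
  set N := Nset n ε t f with hNdef
  have hNm : MeasurableSet N := S11.measurableSet_Nset hfc ε t
  have hNsub : N ⊆ Omega n := fun z hz => hz.1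
  set M := normAinf n t f with hMdef
  have hM : ∀ z ∈ Omega n, ‖f z‖ * gam n t z ≤ M := by
    intro z hz
    exact le_ciSup hfbdd (⟨z, hz⟩ : Omega n)
  have hM0 : 0 ≤ M := by
    obtain ⟨z, hz⟩ := S11.omega_nonempty (n := n)
    exact le_trans (mul_nonneg (norm_nonneg _) (S11.gam_pos hz).le) (hM z hz)
  have hfγ : ∀ w ∈ Omega n, ‖f w‖ * gam n β w ≤ M * gam n (β - t) w := by
    intro w hw
    rw [S11.gam_split (β := β) (t := t) hw]
    have h1 := hM w hw
    have h2 : 0 ≤ gam n (β - t) w := (S11.gam_pos hw).le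
    calc ‖f w‖ * (gam n t w * gam n (β - t) w)
        = ‖f w‖ * gam n t w * gam n (β - t) w := by ring
      _ ≤ M * gam n (β - t) w := mul_le_mul_of_nonneg_right h1 h2
  set Iz : (Fin (n+1) → ℂ) → ℝ≥0∞ := fun z =>
    ∫⁻ w in N, ENNReal.ofReal (gam n (β - t) w * ‖Berg n β z w‖) with hIdef
  have hImeas : Measurable Iz := by
    have hkm : Measurable fun p : ((Fin (n+1) → ℂ)) × ((Fin (n+1) → ℂ)) =>
        (Prod.snd ⁻¹' N).indicator (fun q : ((Fin (n+1) → ℂ)) × ((Fin (n+1) → ℂ)) =>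
          ENNReal.ofReal (gam n (β - t) q.2 * ‖Berg n β q.1 q.2‖)) p := by
      apply Measurable.indicator
      · exact ENNReal.measurable_ofReal.comp
          (((S11.measurable_gam (β - t)).comp measurable_snd).mul
            (continuous_norm.measurable.comp (S11.measurable_berg2 β)))
      · exact hNm.preimage measurable_snd
    have heq : Iz = fun z => ∫⁻ w,
        (Prod.snd ⁻¹' N).indicator (fun q : ((Fin (n+1) → ℂ)) × ((Fin (n+1) → ℂ)) =>
          ENNReal.ofReal (gam n (β - t) q.2 * ‖Berg n β q.1 q.2‖)) (z, w) := by
      funext z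
      show (∫⁻ w in N, ENNReal.ofReal (gam n (β - t) w * ‖Berg n β z w‖)) = _
      rw [← lintegral_indicator hNm]
      apply lintegral_congr
      intro w
      by_cases hw : w ∈ N <;> simp [Set.indicator, hw]
    rw [heq]
    exact hkm.lintegral_prod_right'
  have hGint : Gint n β t ν ε f
      = ∫⁻ z in Omega n, (Iz z) ^ 2 * ENNReal.ofReal (gam n ν z) := rfl
  have hzstar : ∃ zs ∈ Omega n, Iz zs < ⊤ := by
    have hmeas2 : Measurable fun z => (Iz z) ^ 2 * ENNReal.ofReal (gam n ν z) :=
      (hImeas.pow_const 2).mul (ENNReal.measurable_ofReal.comp (S11.measurable_gam ν))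
    have hae : ∀ᵐ z ∂(volume.restrict (Omega n)),
        (Iz z) ^ 2 * ENNReal.ofReal (gam n ν z) < ⊤ :=
      ae_lt_top hmeas2 (by rw [← hGint]; exact hG.ne)
    have hne : (volume.restrict (Omega n)) ≠ 0 := by
      rw [Ne, Measure.restrict_eq_zero]
      exact (S11.isOpen_Omega.measure_pos volume S11.omega_nonempty).ne'
    have hnb : (ae (volume.restrict (Omega n))).NeBot := ae_neBot.mpr hne
    obtain ⟨zs, hzs1, hzs2⟩ :=
      ((ae_restrict_mem S11.isOpen_Omega.measurableSet).and hae).exists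
    refine ⟨zs, hzs1, ?_⟩
    by_contra htop
    have htop' : Iz zs = ⊤ := top_le_iff.mp (not_lt.mp htop)
    rw [htop'] at hzs2
    have hγ : 0 < gam n ν zs := S11.gam_pos hzs1
    rw [ENNReal.top_pow (by norm_num), ENNReal.top_mul
      (by simpa [ENNReal.ofReal_pos] using hγ)] at hzs2
    exact lt_irrefl _ hzs2
  have hIfin : ∀ z ∈ Omega n, Iz z < ⊤ := by
    obtain ⟨zs, hzsΩ, hzsf⟩ := hzstar
    intro z hz
    exact S11.kernel_finite_transfer hβ hNsub hNm hzsΩ hz hzsf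
  -- integrability of dominating functions
  have hbd_int : ∀ z ∈ Omega n, ∀ K : ℝ,
      Integrable (fun w => K * (gam n (β - t) w * ‖Berg n β z w‖))
        (volume.restrict N) := by
    intro z hz K
    constructor
    · exact (((S11.measurable_gam (β - t)).mul
        (continuous_norm.measurable.comp (S11.measurable_berg β z))).const_mul
          K).aestronglyMeasurable
    · rw [hasFiniteIntegral_iff_norm]
      calc (∫⁻ w in N, ENNReal.ofReal ‖K * (gam n (β - t) w * ‖Berg n β z w‖)‖)
          ≤ ∫⁻ w in N, ENNReal.ofReal |K| *
              ENNReal.ofReal (gam n (β - t) w * ‖Berg n β z w‖) := by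
            apply lintegral_mono_ae
            filter_upwards [ae_restrict_mem hNm] with w hw
            have h0 : 0 ≤ gam n (β - t) w * ‖Berg n β z w‖ :=
              mul_nonneg (S11.gam_pos (hNsub hw)).le (norm_nonneg _)
            rw [Real.norm_eq_abs, abs_mul, _root_.abs_of_nonneg h0,
              ENNReal.ofReal_mul (abs_nonneg K)]
        _ = ENNReal.ofReal |K| * Iz z := lintegral_const_mul' _ _ ENNReal.ofReal_ne_top
        _ < ⊤ := ENNReal.mul_lt_top ENNReal.ofReal_lt_top (hIfin z hz)
  have hFmeas : ∀ z : Fin (n+1) → ℂ,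
      AEStronglyMeasurable (fun w => Berg n β z w * (f w * (gam n β w : ℂ)))
        (volume.restrict N) := by
    intro z
    exact ((S11.measurable_berg β z).aestronglyMeasurable).mul
      (((hfc.mono hNsub).aestronglyMeasurable hNm).mul
        ((Complex.measurable_ofReal.comp (S11.measurable_gam β)).aestronglyMeasurable))
  have hFint : ∀ z ∈ Omega n,
      Integrable (fun w => Berg n β z w * (f w * (gam n β w : ℂ)))
        (volume.restrict N) := by
    intro z hz
    apply Integrable.mono' (hbd_int z hz M) (hFmeas z)
    filter_upwards [ae_restrict_mem hNm] with w hw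
    have hwΩ := hNsub hw
    have hγβ : 0 ≤ gam n β w := (S11.gam_pos hwΩ).le
    rw [norm_mul, norm_mul, Complex.norm_real, Real.norm_eq_abs, _root_.abs_of_nonneg hγβ]
    calc ‖Berg n β z w‖ * (‖f w‖ * gam n β w)
        ≤ ‖Berg n β z w‖ * (M * gam n (β - t) w) :=
          mul_le_mul_of_nonneg_left (hfγ w hwΩ) (norm_nonneg _)
      _ = M * (gam n (β - t) w * ‖Berg n β z w‖) := by ring
  -- differentiability
  have hdiff : ∀ z₀ ∈ Omega n, DifferentiableAt ℂ
      (fun z => ∫ w in N, Berg n β z w * f w * (gam n β w : ℂ)) z₀ := by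
    intro z₀ hz₀
    obtain ⟨r, hr, hball, hcomp⟩ := S11.ball_comp hz₀
    obtain ⟨C₀, hC₀1, hC₀⟩ := S11.T_bound hz₀
    have hC₀0 : (0:ℝ) < C₀ := lt_of_lt_of_le one_pos hC₀1
    have he : (0:ℝ) < S11.eR n β := S11.eR_pos hβ
    have hrw : (fun z => ∫ w in N, Berg n β z w * f w * (gam n β w : ℂ))
        = fun z => ∫ w in N, Berg n β z w * (f w * (gam n β w : ℂ)) := by
      simp only [mul_assoc]
    rw [hrw]
    set e := S11.eR n β with hedef
    set K' := M * e * 2 ^ (e + 1) * C₀ with hK'def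
    refine HasFDerivAt.differentiableAt (hasFDerivAt_integral_of_dominated_of_fderiv_le
      (F' := fun z w => (f w * (gam n β w : ℂ)) • S11.dBerg n β z w)
      (bound := fun w => K' * (gam n (β - t) w * ‖Berg n β z₀ w‖))
      (Metric.ball_mem_nhds z₀ hr) (Filter.Eventually.of_forall fun x => hFmeas x) (hFint z₀ hz₀) ?_ ?_ ?_ ?_)
    · -- hF'_meas
      apply AEStronglyMeasurable.smul (f := fun w => f w * (gam n β w : ℂ))
        (g := fun w => S11.dBerg n β z₀ w)
      · exact ((hfc.mono hNsub).aestronglyMeasurable hNm).mul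
          ((Complex.measurable_ofReal.comp (S11.measurable_gam β)).aestronglyMeasurable)
      · apply AEStronglyMeasurable.smul
          (f := fun w => (-(((n:ℂ)+1)+1+(β:ℂ))) * S11.base n z₀ w ^ ((-(((n:ℂ)+1)+1+(β:ℂ))) - 1))
          (g := fun w => S11.Lmap n w)
        · exact (measurable_const.mul (S11.measurable_cpow_const
            ((S11.continuous_base2.measurable).comp
              (measurable_const.prodMk measurable_id)) _)).aestronglyMeasurable
        · exact S11.continuous_Lmap.aestronglyMeasurable
    · -- h_bound
      filter_upwards [ae_restrict_mem hNm] with w hwN z hz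
      have hwΩ := hNsub hwN
      have hzΩ := hball z hz
      have hbz : 0 < ‖S11.base n z w‖ := S11.abs_base_pos hzΩ hwΩ
      have hbz₀ : 0 < ‖S11.base n z₀ w‖ := S11.abs_base_pos hz₀ hwΩ
      have hcmp := hcomp z hz w hwΩ
      have hγβ : 0 ≤ gam n β w := (S11.gam_pos hwΩ).le
      have hγβt : 0 ≤ gam n (β - t) w := (S11.gam_pos hwΩ).le
      have hnorm : ‖(f w * (gam n β w : ℂ)) • S11.dBerg n β z w‖
          = ‖f w‖ * gam n β w * ‖S11.dBerg n β z w‖ := by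
        rw [norm_smul (f w * (gam n β w : ℂ)) (S11.dBerg n β z w),
          norm_mul, Complex.norm_real, Real.norm_eq_abs, _root_.abs_of_nonneg hγβ]
      have hrp : ‖S11.base n z w‖ ^ (-e - 1)
          ≤ 2 ^ (e + 1) * ‖S11.base n z₀ w‖ ^ (-e - 1) := by
        have h := S11.rpow_neg_compare hbz hbz₀ two_pos hcmp
          (by linarith : (0:ℝ) ≤ e + 1)
        rw [show -e - 1 = -(e + 1) by ring]
        exact h
      have hLm := hC₀ w hwΩ
      have hdb : ‖S11.dBerg n β z w‖
          ≤ e * (2 ^ (e + 1) * ‖S11.base n z₀ w‖ ^ (-e - 1))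
            * (C₀ * ‖S11.base n z₀ w‖) := by
        refine le_trans (S11.norm_dBerg_le hβ z w) ?_
        have h1 : e * ‖S11.base n z w‖ ^ (-e - 1)
            ≤ e * (2 ^ (e + 1) * ‖S11.base n z₀ w‖ ^ (-e - 1)) :=
          mul_le_mul_of_nonneg_left hrp he.le
        apply mul_le_mul h1 hLm (by linarith [S11.T_nonneg (n := n) w]) (by positivity)
      have hBB : ‖S11.base n z₀ w‖ ^ (-e - 1) * ‖S11.base n z₀ w‖
          = ‖S11.base n z₀ w‖ ^ (-e) := by
        nth_rewrite 2 [← Real.rpow_one (‖S11.base n z₀ w‖)]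
        rw [← Real.rpow_add hbz₀]
        norm_num
      rw [hnorm]
      calc ‖f w‖ * gam n β w * ‖S11.dBerg n β z w‖
          ≤ (M * gam n (β - t) w)
            * (e * (2 ^ (e + 1) * ‖S11.base n z₀ w‖ ^ (-e - 1))
              * (C₀ * ‖S11.base n z₀ w‖)) :=
            mul_le_mul (hfγ w hwΩ) hdb (norm_nonneg _) (by positivity)
        _ = K' * (gam n (β - t) w * (‖S11.base n z₀ w‖ ^ (-e - 1)
              * ‖S11.base n z₀ w‖)) := by rw [hK'def]; ring
        _ = K' * (gam n (β - t) w * ‖Berg n β z₀ w‖) := by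
            rw [hBB, S11.abs_berg]
    · -- bound integrable
      exact hbd_int z₀ hz₀ K'
    · -- h_diff
      filter_upwards [ae_restrict_mem hNm] with w hwN z hz
      have hre : 0 < (S11.base n z w).re := S11.base_re_pos (hball z hz) (hNsub hwN)
      exact (S11.hasFDerivAt_berg hre).mul_const _
  have hdOn : DifferentiableOn ℂ
      (fun z => (Cβ : ℂ) * ∫ w in N, Berg n β z w * f w * (gam n β w : ℂ)) (Omega n) :=
    fun z hz => ((differentiableAt_const _).mul (hdiff z hz)).differentiableWithinAt
  set g2 : (Fin (n+1) → ℂ) → ℂ :=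
    fun z => (Cβ : ℂ) * ∫ w in N, Berg n β z w * f w * (gam n β w : ℂ) with hg2
  have hpt : ∀ z ∈ Omega n, ENNReal.ofReal (‖g2 z‖ ^ 2 * gam n ν z)
      ≤ (ENNReal.ofReal (|Cβ| * M)) ^ 2 * ((Iz z) ^ 2 * ENNReal.ofReal (gam n ν z)) := by
    intro z hz
    have hb1 : ENNReal.ofReal ‖∫ w in N, Berg n β z w * f w * (gam n β w : ℂ)‖
        ≤ ENNReal.ofReal M * Iz z := by
      rw [ofReal_norm]
      refine le_trans (enorm_integral_le_lintegral_enorm _) ?_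
      rw [← lintegral_const_mul' _ _ ENNReal.ofReal_ne_top]
      apply lintegral_mono_ae
      filter_upwards [ae_restrict_mem hNm] with w hw
      have hwΩ := hNsub hw
      rw [← ofReal_norm, ← ENNReal.ofReal_mul hM0]
      apply ENNReal.ofReal_le_ofReal
      have hγβ : 0 ≤ gam n β w := (S11.gam_pos hwΩ).le
      rw [norm_mul, norm_mul, Complex.norm_real, Real.norm_eq_abs,
        _root_.abs_of_nonneg hγβ]
      calc ‖Berg n β z w‖ * ‖f w‖ * gam n β w
          = ‖f w‖ * gam n β w * ‖Berg n β z w‖ := by ring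
        _ ≤ M * gam n (β - t) w * ‖Berg n β z w‖ :=
            mul_le_mul_of_nonneg_right (hfγ w hwΩ) (norm_nonneg _)
        _ = M * (gam n (β - t) w * ‖Berg n β z w‖) := by ring
    have habs : ‖g2 z‖
        = |Cβ| * ‖∫ w in N, Berg n β z w * f w * (gam n β w : ℂ)‖ := by
      show ‖(Cβ:ℂ) * ∫ w in N, Berg n β z w * f w * (gam n β w : ℂ)‖ = _
      rw [norm_mul, Complex.norm_real, Real.norm_eq_abs]
    have hkey : ENNReal.ofReal (‖g2 z‖)
        ≤ ENNReal.ofReal (|Cβ| * M) * Iz z := by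
      rw [habs, ENNReal.ofReal_mul (abs_nonneg Cβ)]
      calc ENNReal.ofReal |Cβ|
            * ENNReal.ofReal ‖∫ w in N, Berg n β z w * f w * (gam n β w : ℂ)‖
          ≤ ENNReal.ofReal |Cβ| * (ENNReal.ofReal M * Iz z) := mul_le_mul_right hb1 _
        _ = ENNReal.ofReal (|Cβ| * M) * Iz z := by
            rw [ENNReal.ofReal_mul (abs_nonneg Cβ), mul_assoc]
    calc ENNReal.ofReal (‖g2 z‖ ^ 2 * gam n ν z)
        = (ENNReal.ofReal (‖g2 z‖)) ^ 2 * ENNReal.ofReal (gam n ν z) := by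
          rw [ENNReal.ofReal_mul (sq_nonneg _), ENNReal.ofReal_pow (norm_nonneg _)]
      _ ≤ (ENNReal.ofReal (|Cβ| * M) * Iz z) ^ 2 * ENNReal.ofReal (gam n ν z) := by
          gcongr
      _ = (ENNReal.ofReal (|Cβ| * M)) ^ 2 * ((Iz z) ^ 2 * ENNReal.ofReal (gam n ν z)) := by
          rw [mul_pow]; ring
  have hL : (∫⁻ z in Omega n, ENNReal.ofReal (‖g2 z‖ ^ 2 * gam n ν z))
      ≤ (ENNReal.ofReal (|Cβ| * M)) ^ 2 * Gint n β t ν ε f := by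
    rw [hGint, ← lintegral_const_mul' _ _ (by exact (ENNReal.pow_lt_top
      ENNReal.ofReal_lt_top).ne)]
    apply lintegral_mono_ae
    filter_upwards [ae_restrict_mem S11.isOpen_Omega.measurableSet] with z hz
    exact hpt z hz
  have hLfin : (∫⁻ z in Omega n, ENNReal.ofReal (‖g2 z‖ ^ 2 * gam n ν z)) < ⊤ :=
    lt_of_le_of_lt hL (ENNReal.mul_lt_top (ENNReal.pow_lt_top ENNReal.ofReal_lt_top) hG)
  refine ⟨hdOn, ⟨hdOn, hLfin⟩, ?_⟩
  -- final numeric bound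
  have hnn : 0 ≤ ∫ z in Omega n, ‖g2 z‖ ^ 2 * gam n ν z := by
    apply integral_nonneg_of_ae
    filter_upwards [ae_restrict_mem S11.isOpen_Omega.measurableSet] with z hz
    exact mul_nonneg (sq_nonneg _) (S11.gam_pos hz).le
  have hsq : normA2 n ν g2 ^ 2 = ∫ z in Omega n, ‖g2 z‖ ^ 2 * gam n ν z :=
    Real.sq_sqrt hnn
  have haesm : AEStronglyMeasurable (fun z => ‖g2 z‖ ^ 2 * gam n ν z)
      (volume.restrict (Omega n)) := by
    have hg2c : ContinuousOn g2 (Omega n) := hdOn.continuousOn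
    exact (((continuous_norm.comp_continuousOn hg2c).pow 2).mul
      S11.continuousOn_gam).aestronglyMeasurable S11.isOpen_Omega.measurableSet
  have heq2 : ∫ z in Omega n, ‖g2 z‖ ^ 2 * gam n ν z
      = (∫⁻ z in Omega n,
          ENNReal.ofReal (‖g2 z‖ ^ 2 * gam n ν z)).toReal := by
    rw [integral_eq_lintegral_of_nonneg_ae ?_ haesm]
    filter_upwards [ae_restrict_mem S11.isOpen_Omega.measurableSet] with z hz
    exact mul_nonneg (sq_nonneg _) (S11.gam_pos hz).le
  have hfinal : (∫⁻ z in Omega n,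
      ENNReal.ofReal (‖g2 z‖ ^ 2 * gam n ν z)).toReal
      ≤ (Cβ ^ 2 + 1) * M ^ 2 * (Gint n β t ν ε f).toReal := by
    have hRfin : ((ENNReal.ofReal (|Cβ| * M)) ^ 2 * Gint n β t ν ε f) ≠ ⊤ :=
      (ENNReal.mul_lt_top (ENNReal.pow_lt_top ENNReal.ofReal_lt_top) hG).ne
    have h1 := ENNReal.toReal_mono hRfin hL
    have h2 : ((ENNReal.ofReal (|Cβ| * M)) ^ 2 * Gint n β t ν ε f).toReal
        = (|Cβ| * M) ^ 2 * (Gint n β t ν ε f).toReal := by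
      rw [ENNReal.toReal_mul, ENNReal.toReal_pow, ENNReal.toReal_ofReal (by positivity)]
    rw [h2] at h1
    have h3 : (|Cβ| * M) ^ 2 = Cβ ^ 2 * M ^ 2 := by
      rw [mul_pow, _root_.sq_abs]
    nlinarith [ENNReal.toReal_nonneg (a := Gint n β t ν ε f), sq_nonneg M]
  rw [hsq, heq2]
  exact hfinal

end
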